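/- Let p be a prime, S a finite set of residues in Z_p with |S| = U ≥ 1, ℓ a natural number with 2^ℓ ≤ p, t = ⌊p/2^ℓ⌋, and P_ℓ = t/p. Choose (a, b) uniformly at random from {1, …, p−1} × {0, …, p−1} and let X = #{x ∈ S : (a·x + b) mod p < t}. Then for every ε > 0, Pr[|X/P_ℓ − U| > ε·U] ≤ 2^{ℓ+1}/(ε²·U). -/

import Mathlib

/-- The set of hash-function parameter pairs `(a, b) ∈ {1, …, p-1} × {0, …, p-1}`,
viewed inside `Z_p × Z_p`. -/
def hashPairs (p : ℕ) [Fact p.Prime] : Finset (ZMod p × ZMod p) :=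
  Finset.univ.filter (fun ab : ZMod p × ZMod p => ab.1 ≠ 0)

/-- `X = #{x ∈ S : (a·x + b) mod p < t}`, the number of elements of `S` selected by the
level-`ℓ` coordinated sample with threshold `t` under the hash function `(a, b)`. -/
def sampleCount (p : ℕ) [Fact p.Prime] (S : Finset (ZMod p)) (t : ℕ)
    (ab : ZMod p × ZMod p) : ℕ :=
  (S.filter (fun x => (ab.1 * x + ab.2).val < t)).card

open scoped Classical in
/-- Probability of the event `A` under the uniform distribution on `hashPairs p`
(which has `p·(p-1)` elements). -/
noncomputable def hashProb (p : ℕ) [Fact p.Prime] (A : ZMod p × ZMod p → Prop) : ℝ :=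
  (((hashPairs p).filter A).card : ℝ) / ((p : ℝ) * ((p : ℝ) - 1))

lemma card_val_lt_aux (p t : ℕ) [Fact p.Prime] (ht : t ≤ p) :
    (Finset.univ.filter (fun c : ZMod p => c.val < t)).card = t := by
  have hp : 0 < p := (Fact.out : p.Prime).pos
  haveI : NeZero p := ⟨hp.ne'⟩
  rw [← Finset.card_range t]
  refine Finset.card_bij' (fun c _ => c.val) (fun m _ => (m : ZMod p)) ?_ ?_ ?_ ?_
  · intro a ha; simp at ha ⊢; exact ha
  · intro m hm; simp at hm ⊢; exact (Nat.mod_le m p).trans_lt hm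
  · intro a _; simp [ZMod.natCast_val, ZMod.cast_id]
  · intro m hm; simp at hm; exact ZMod.val_cast_of_lt (lt_of_lt_of_le hm ht)

lemma card_one_aux (p t : ℕ) [Fact p.Prime] (ht : t ≤ p) (x : ZMod p) :
    (Finset.univ.filter (fun ab : ZMod p × ZMod p =>
      ab.1 ≠ 0 ∧ (ab.1 * x + ab.2).val < t)).card = (p - 1) * t := by
  have hcard : ((Finset.univ.filter (fun a : ZMod p => a ≠ 0)) ×ˢ
      (Finset.univ.filter (fun c : ZMod p => c.val < t))).card = (p - 1) * t := by
    rw [Finset.card_product, card_val_lt_aux p t ht]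
    congr 1
    rw [Finset.filter_ne' Finset.univ 0, Finset.card_erase_of_mem (Finset.mem_univ 0)]
    simp [ZMod.card]
  rw [← hcard]
  refine Finset.card_bij' (fun ab _ => (ab.1, ab.1 * x + ab.2))
    (fun ac _ => (ac.1, ac.2 - ac.1 * x)) ?_ ?_ ?_ ?_
  · intro ab hab; simp at hab ⊢; exact hab
  · intro ac hac; simp at hac ⊢; exact hac
  · intro ab _; simp
  · intro ac _; simp

lemma card_two_aux (p t : ℕ) [Fact p.Prime] (ht : t ≤ p) (x y : ZMod p) (hxy : x ≠ y) :
    (Finset.univ.filter (fun ab : ZMod p × ZMod p =>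
      ab.1 ≠ 0 ∧ ((ab.1 * x + ab.2).val < t ∧ (ab.1 * y + ab.2).val < t))).card
      = t * t - t := by
  have hxy' : x - y ≠ 0 := sub_ne_zero.mpr hxy
  have hcard : (Finset.univ.filter (fun c : ZMod p => c.val < t)).offDiag.card = t * t - t := by
    rw [Finset.offDiag_card, card_val_lt_aux p t ht]
  rw [← hcard]
  refine Finset.card_bij' (fun ab _ => (ab.1 * x + ab.2, ab.1 * y + ab.2))
    (fun uv _ => ((uv.1 - uv.2) / (x - y), uv.1 - (uv.1 - uv.2) / (x - y) * x)) ?_ ?_ ?_ ?_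
  · intro ab hab
    simp only [Finset.mem_filter, Finset.mem_univ, true_and] at hab
    rw [Finset.mem_offDiag]
    refine ⟨by simp [hab.2.1], by simp [hab.2.2], ?_⟩
    intro h
    have := sub_eq_zero.mpr h
    have h2 : ab.1 * (x - y) = 0 := by ring_nf; ring_nf at this; linear_combination this
    rcases mul_eq_zero.mp h2 with h | h
    · exact hab.1 h
    · exact hxy' h
  · intro uv huv
    rw [Finset.mem_offDiag] at huv
    simp only [Finset.mem_filter, Finset.mem_univ, true_and] at huv ⊢
    obtain ⟨h1, h2, h3⟩ := huv
    constructor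
    · exact div_ne_zero (sub_ne_zero.mpr h3) hxy'
    constructor
    · have : (uv.1 - uv.2) / (x - y) * x + (uv.1 - (uv.1 - uv.2) / (x - y) * x) = uv.1 := by ring
      rw [this]; exact h1
    · have : (uv.1 - uv.2) / (x - y) * y + (uv.1 - (uv.1 - uv.2) / (x - y) * x)
          = uv.1 - (uv.1 - uv.2) / (x - y) * (x - y) := by ring
      rw [this, div_mul_cancel₀ _ hxy']
      simpa using h2
  · intro ab hab
    simp only [Finset.mem_filter, Finset.mem_univ, true_and] at hab
    have : ab.1 * x + ab.2 - (ab.1 * y + ab.2) = ab.1 * (x - y) := by ring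
    rw [Prod.ext_iff]
    constructor
    · simp only; rw [this, mul_div_assoc, div_self hxy', mul_one]
    · simp only; rw [this, mul_div_assoc, div_self hxy', mul_one]; ring
  · intro uv huv
    rw [Finset.mem_offDiag] at huv
    obtain ⟨_, _, h3⟩ := huv
    have key : (uv.1 - uv.2) / (x - y) * (x - y) = uv.1 - uv.2 := div_mul_cancel₀ _ hxy'
    rw [Prod.ext_iff]
    constructor
    · simp only; ring
    · simp only; linear_combination -key

lemma sum_one_aux (p t : ℕ) [Fact p.Prime] (ht : t ≤ p) (S : Finset (ZMod p)) :
    ∑ ab ∈ hashPairs p, sampleCount p S t ab = S.card * ((p - 1) * t) := by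
  classical
  have : ∀ ab, sampleCount p S t ab = ∑ x ∈ S, if (ab.1 * x + ab.2).val < t then 1 else 0 := by
    intro ab; rw [sampleCount, Finset.card_filter]
  simp_rw [this]
  rw [Finset.sum_comm]
  have : ∀ x ∈ S, (∑ ab ∈ hashPairs p, if (ab.1 * x + ab.2).val < t then 1 else 0)
      = (p - 1) * t := by
    intro x _
    rw [← Finset.card_filter, hashPairs, Finset.filter_filter, card_one_aux p t ht x]
  rw [Finset.sum_congr rfl this, Finset.sum_const, smul_eq_mul]

lemma sum_two_aux (p t : ℕ) [Fact p.Prime] (ht : t ≤ p) (S : Finset (ZMod p)) :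
    ∑ ab ∈ hashPairs p, (sampleCount p S t ab) ^ 2
      = S.card * ((p - 1) * t) + S.card * (S.card - 1) * (t * t - t) := by
  classical
  have h1 : ∀ ab, (sampleCount p S t ab) ^ 2 = ∑ x ∈ S, ∑ y ∈ S,
      if ((ab.1 * x + ab.2).val < t ∧ (ab.1 * y + ab.2).val < t) then 1 else 0 := by
    intro ab
    rw [sampleCount, Finset.card_filter, sq, Finset.sum_mul_sum]
    refine Finset.sum_congr rfl fun x _ => Finset.sum_congr rfl fun y _ => ?_
    by_cases hx : (ab.1 * x + ab.2).val < t <;> by_cases hy : (ab.1 * y + ab.2).val < t <;>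
      simp [hx, hy]
  simp_rw [h1]
  rw [Finset.sum_comm]
  have h2 : ∀ x ∈ S, (∑ ab ∈ hashPairs p, ∑ y ∈ S,
      if ((ab.1 * x + ab.2).val < t ∧ (ab.1 * y + ab.2).val < t) then 1 else 0)
      = (p - 1) * t + (S.card - 1) * (t * t - t) := by
    intro x hx
    rw [Finset.sum_comm]
    have h3 : ∀ y ∈ S, (∑ ab ∈ hashPairs p,
        if ((ab.1 * x + ab.2).val < t ∧ (ab.1 * y + ab.2).val < t) then 1 else 0)
        = if y = x then (p - 1) * t else t * t - t := by
      intro y _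
      rw [← Finset.card_filter, hashPairs, Finset.filter_filter]
      by_cases hyx : y = x
      · subst hyx
        rw [if_pos rfl, ← card_one_aux p t ht y]
        congr 1
        apply Finset.filter_congr
        intro ab _; simp [and_self_iff]
      · rw [if_neg hyx, card_two_aux p t ht x y (fun h => hyx h.symm)]
    rw [Finset.sum_congr rfl h3, ← Finset.add_sum_erase S _ hx, if_pos rfl]
    congr 1
    rw [Finset.sum_congr rfl (fun y hy => if_neg (Finset.mem_erase.mp hy).1),
      Finset.sum_const, smul_eq_mul, Finset.card_erase_of_mem hx]
  rw [Finset.sum_congr rfl h2, Finset.sum_const, smul_eq_mul]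
  ring

lemma hashPairs_card_aux (p : ℕ) [Fact p.Prime] : (hashPairs p).card = (p - 1) * p := by
  have hp : 0 < p := (Fact.out : p.Prime).pos
  haveI : NeZero p := ⟨hp.ne'⟩
  rw [← card_one_aux p p le_rfl 0, hashPairs]
  congr 1
  apply Finset.filter_congr
  intro ab _
  simp [ZMod.val_lt]

/-- Let `p` be a prime, `S` a finite set of residues in `Z_p` with `|S| = U ≥ 1`, `ℓ` a
natural number with `2^ℓ ≤ p`, `t = ⌊p/2^ℓ⌋`, and `P_ℓ = t/p`. Choose `(a, b)` uniformly
from `{1, …, p-1} × {0, …, p-1}` and let `X = #{x ∈ S : (a·x + b) mod p < t}`. Then for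
every `ε > 0`, `Pr[|X/P_ℓ - U| > ε·U] ≤ 2^(ℓ+1)/(ε²·U)`. -/
theorem stmt12 (p : ℕ) [Fact p.Prime] (S : Finset (ZMod p)) (U : ℕ) (hS : S.card = U)
    (hU : 1 ≤ U) (ℓ : ℕ) (hℓ : 2 ^ ℓ ≤ p) (t : ℕ) (ht : t = p / 2 ^ ℓ)
    (Pℓ : ℝ) (hP : Pℓ = (t : ℝ) / p) (ε : ℝ) (hε : 0 < ε) :
    hashProb p (fun ab => |(sampleCount p S t ab : ℝ) / Pℓ - (U : ℝ)| > ε * U)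
      ≤ 2 ^ (ℓ + 1) / (ε ^ 2 * U) := by
  classical
  have hprime : p.Prime := Fact.out
  have hp2 : 2 ≤ p := hprime.two_le
  have hp1 : 1 ≤ p := le_trans one_le_two hp2
  have h2pos : 0 < 2 ^ ℓ := pow_pos two_pos ℓ
  have ht1 : 1 ≤ t := by rw [ht]; exact (Nat.one_le_div_iff h2pos).mpr hℓ
  have htp : t ≤ p := by rw [ht]; exact Nat.div_le_self _ _
  have hptL : p ≤ t * 2 ^ (ℓ + 1) := by
    have : p < (t + 1) * 2 ^ ℓ := by
      rw [← Nat.div_lt_iff_lt_mul h2pos, ← ht]; omega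
    calc p ≤ (t + 1) * 2 ^ ℓ := this.le
    _ ≤ (t + t) * 2 ^ ℓ := by gcongr <;> omega
    _ = t * 2 ^ (ℓ + 1) := by ring
  -- real versions
  set P : ℝ := (p : ℝ) with hPdef
  set T : ℝ := (t : ℝ) with hTdef
  set Uc : ℝ := (U : ℝ) with hUdef
  have hPpos : (0:ℝ) < P := by rw [hPdef]; exact_mod_cast (Fact.out : p.Prime).pos
  have hP2 : (2:ℝ) ≤ P := by rw [hPdef]; exact_mod_cast hp2
  have hT1 : (1:ℝ) ≤ T := by rw [hTdef]; exact_mod_cast ht1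
  have hTP : T ≤ P := by rw [hTdef, hPdef]; exact_mod_cast htp
  have hU1 : (1:ℝ) ≤ Uc := by rw [hUdef]; exact_mod_cast hU
  have hL : P ≤ T * 2 ^ (ℓ + 1) := by rw [hTdef, hPdef]; exact_mod_cast hptL
  have hPlpos : 0 < Pℓ := by rw [hP]; positivity
  set Ω := hashPairs p with hΩ
  set A : ZMod p × ZMod p → Prop :=
    fun ab => |(sampleCount p S t ab : ℝ) / Pℓ - (U : ℝ)| > ε * U with hA
  set B := Ω.filter A with hB
  set X : ZMod p × ZMod p → ℝ := fun ab => (sampleCount p S t ab : ℝ) with hX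
  set μ : ℝ := Uc * Pℓ with hμ
  -- Chebyshev pointwise
  have hpoint : ∀ ab ∈ B, (ε * Uc * Pℓ)^2 ≤ (X ab - μ)^2 := by
    intro ab hab
    have hev : |X ab / Pℓ - Uc| > ε * Uc := (Finset.mem_filter.mp hab).2
    have heq : X ab - μ = (X ab / Pℓ - Uc) * Pℓ := by
      rw [hμ]; field_simp
    have habs : |X ab - μ| = |X ab / Pℓ - Uc| * Pℓ := by
      rw [heq, abs_mul, abs_of_pos hPlpos]
    have h1 : ε * Uc * Pℓ ≤ |X ab - μ| := by
      rw [habs]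
      have := mul_le_mul_of_nonneg_right hev.le hPlpos.le
      linarith
    calc (ε * Uc * Pℓ)^2 ≤ |X ab - μ|^2 := by
          apply pow_le_pow_left₀ (by positivity) h1
    _ = (X ab - μ)^2 := sq_abs _
  have hcheb : (B.card : ℝ) * (ε * Uc * Pℓ)^2 ≤ ∑ ab ∈ Ω, (X ab - μ)^2 := by
    calc (B.card : ℝ) * (ε * Uc * Pℓ)^2 = ∑ _ab ∈ B, (ε * Uc * Pℓ)^2 := by
          rw [Finset.sum_const, nsmul_eq_mul]
    _ ≤ ∑ ab ∈ B, (X ab - μ)^2 := Finset.sum_le_sum hpoint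
    _ ≤ ∑ ab ∈ Ω, (X ab - μ)^2 :=
          Finset.sum_le_sum_of_subset_of_nonneg (Finset.filter_subset _ _)
            (fun ab _ _ => sq_nonneg _)
  -- moment computations, cast to ℝ
  have hS1 : ∑ ab ∈ Ω, X ab = Uc * ((P - 1) * T) := by
    have := sum_one_aux p t htp S
    rw [hS] at this
    have hcast : (∑ ab ∈ Ω, X ab) = ((∑ ab ∈ Ω, sampleCount p S t ab : ℕ) : ℝ) := by
      push_cast; rfl
    rw [hcast, this]
    push_cast [Nat.cast_sub hp1]
    ring
  have hS2 : ∑ ab ∈ Ω, (X ab)^2 = Uc * ((P - 1) * T) + Uc * (Uc - 1) * (T * T - T) := by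
    have := sum_two_aux p t htp S
    rw [hS] at this
    have hcast : (∑ ab ∈ Ω, (X ab)^2)
        = ((∑ ab ∈ Ω, (sampleCount p S t ab)^2 : ℕ) : ℝ) := by push_cast; rfl
    rw [hcast, this]
    have htt : t ≤ t * t := Nat.le_mul_of_pos_left t ht1
    push_cast [Nat.cast_sub hp1, Nat.cast_sub hU, Nat.cast_sub htt]
    ring
  have hΩcard : ((Ω.card : ℝ)) = (P - 1) * P := by
    rw [hΩ, hashPairs_card_aux]
    push_cast [Nat.cast_sub hp1]
    ring
  have hexpand : ∑ ab ∈ Ω, (X ab - μ)^2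
      = (∑ ab ∈ Ω, (X ab)^2) - 2 * μ * (∑ ab ∈ Ω, X ab) + (Ω.card : ℝ) * μ^2 := by
    have h : ∀ ab ∈ Ω, (X ab - μ)^2 = (X ab)^2 - 2 * μ * X ab + μ^2 := fun ab _ => by ring
    rw [Finset.sum_congr rfl h, Finset.sum_add_distrib, Finset.sum_sub_distrib,
      Finset.sum_const, nsmul_eq_mul, ← Finset.mul_sum]
  -- variance bound
  have hV : ∑ ab ∈ Ω, (X ab - μ)^2 ≤ Uc * T * (P - 1) := by
    rw [hexpand, hS1, hS2, hΩcard, hμ, hP]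
    set q := T / P with hqdef
    have hqpos : 0 < q := by rw [hqdef]; positivity
    have hq : q * P = T := by rw [hqdef]; field_simp
    have hkey : (Uc - 1) * (T - 1) * P ≤ Uc * T * (P - 1) := by
      nlinarith [mul_le_mul_of_nonneg_left hTP (by positivity : (0:ℝ) ≤ Uc),
        mul_le_mul_of_nonneg_right hT1 hPpos.le]
    have hq7 : (P - 1) * P * (Uc * q)^2 = (P - 1) * Uc^2 * q * T := by
      linear_combination ((P - 1) * Uc^2 * q) * hq
    have h6 : Uc * (Uc - 1) * (T * T - T) ≤ (P - 1) * Uc^2 * q * T := by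
      have e1 : (P - 1) * Uc^2 * q * T = Uc * q * (Uc * T * (P - 1)) := by ring
      rw [e1]
      calc Uc * (Uc - 1) * (T * T - T) = Uc * q * ((Uc - 1) * (T - 1) * P) := by
            linear_combination (-(Uc * (Uc - 1) * (T - 1))) * hq
      _ ≤ Uc * q * (Uc * T * (P - 1)) :=
            mul_le_mul_of_nonneg_left hkey (by positivity)
    linarith [h6, hq7]
  -- combine
  have hBV : (B.card : ℝ) * (ε * Uc * Pℓ)^2 ≤ Uc * T * (P - 1) := le_trans hcheb hV
  have hP1' : (0:ℝ) ≤ P - 1 := by linarith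
  have hgoal : hashProb p A = (B.card : ℝ) / (P * (P - 1)) := by
    unfold hashProb
    rw [hB, hΩ]
  rw [hgoal, div_le_div_iff₀ (by nlinarith) (by positivity)]
  have e2 : (ε * Uc * Pℓ)^2 * P^2 = ε^2 * Uc^2 * T^2 := by
    rw [hP]; field_simp
  have h1 : (B.card : ℝ) * (ε^2 * Uc^2 * T^2) ≤ Uc * T * (P - 1) * P^2 := by
    calc (B.card : ℝ) * (ε^2 * Uc^2 * T^2) = (B.card : ℝ) * (ε * Uc * Pℓ)^2 * P^2 := by
          linear_combination (-(B.card : ℝ)) * e2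
    _ ≤ Uc * T * (P - 1) * P^2 := mul_le_mul_of_nonneg_right hBV (sq_nonneg P)
  have h4 : Uc * T * (P - 1) * P^2 ≤ (Uc * T * (P - 1) * P) * (T * 2 ^ (ℓ + 1)) := by
    have hc : (0:ℝ) ≤ Uc * T * (P - 1) * P :=
      mul_nonneg (mul_nonneg (mul_nonneg (by linarith) (by linarith)) hP1') hPpos.le
    calc Uc * T * (P - 1) * P^2 = (Uc * T * (P - 1) * P) * P := by ring
    _ ≤ (Uc * T * (P - 1) * P) * (T * 2 ^ (ℓ + 1)) := mul_le_mul_of_nonneg_left hL hc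
  apply le_of_mul_le_mul_right _ (show (0:ℝ) < Uc * T^2 by positivity)
  calc (B.card : ℝ) * (ε^2 * Uc) * (Uc * T^2) = (B.card : ℝ) * (ε^2 * Uc^2 * T^2) := by ring
  _ ≤ Uc * T * (P - 1) * P^2 := h1
  _ ≤ (Uc * T * (P - 1) * P) * (T * 2 ^ (ℓ + 1)) := h4
  _ = 2 ^ (ℓ + 1) * (P * (P - 1)) * (Uc * T^2) := by ring
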